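/- Let M, D > 0 and let i, N be natural numbers with 1 ≤ i ≤ N. Let (t_n), (K_n) be nonnegative real numbers for i ≤ n ≤ N with Σ_{n=i}^N t_n > 0, let (J_n)_{i ≤ n ≤ N} be real numbers, and let (a_n)_{i ≤ n ≤ N+1} be nonnegative real numbers satisfying a_{n+1} ≤ a_n(1 + 2 t_n K_n) − 2 t_n J_n + t_n² M + 2 t_n K_n for all i ≤ n ≤ N, and a_n ≤ 4D² for all i ≤ n ≤ N. Define γ_n := t_n / (Σ_{ℓ=i}^N t_ℓ). Then Σ_{n=i}^N γ_n J_n ≤ (4D² + Σ_{n=i}^N [8 t_n K_n D² + t_n² M + 2 t_n K_n]) / (2 Σ_{n=i}^N t_n). -/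

import Mathlib

/-- Deterministic content of estimates (3.9)–(3.13): averaged objective error bound. -/
theorem stmt_9 (M D : ℝ) (hM : 0 < M) (hD : 0 < D)
    (i N : ℕ) (hi : 1 ≤ i) (hiN : i ≤ N)
    (t K J a : ℕ → ℝ)
    (ht : ∀ n : ℕ, i ≤ n → n ≤ N → 0 ≤ t n)
    (hK : ∀ n : ℕ, i ≤ n → n ≤ N → 0 ≤ K n)
    (htsum : 0 < ∑ n ∈ Finset.Icc i N, t n)
    (ha : ∀ n : ℕ, i ≤ n → n ≤ N + 1 → 0 ≤ a n)
    (hrec : ∀ n : ℕ, i ≤ n → n ≤ N →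
      a (n + 1) ≤ a n * (1 + 2 * t n * K n) - 2 * t n * J n + (t n) ^ 2 * M + 2 * t n * K n)
    (haD : ∀ n : ℕ, i ≤ n → n ≤ N → a n ≤ 4 * D ^ 2) :
    ∑ n ∈ Finset.Icc i N, (t n / ∑ l ∈ Finset.Icc i N, t l) * J n
      ≤ (4 * D ^ 2 + ∑ n ∈ Finset.Icc i N,
          (8 * t n * K n * D ^ 2 + (t n) ^ 2 * M + 2 * t n * K n))
        / (2 * ∑ n ∈ Finset.Icc i N, t n) := by
  set S := ∑ l ∈ Finset.Icc i N, t l with hS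
  -- pointwise step estimate
  have step : ∀ n : ℕ, i ≤ n → n ≤ N →
      2 * t n * J n ≤ a n - a (n + 1) + (8 * t n * K n * D ^ 2 + (t n) ^ 2 * M + 2 * t n * K n) := by
    intro n hn1 hn2
    have h1 := hrec n hn1 hn2
    have h2 : 2 * t n * K n * a n ≤ 2 * t n * K n * (4 * D ^ 2) := by
      have := mul_nonneg (mul_nonneg (by norm_num : (0:ℝ) ≤ 2) (ht n hn1 hn2)) (hK n hn1 hn2)
      exact mul_le_mul_of_nonneg_left (haD n hn1 hn2) this
    nlinarith [h1, h2]
  -- telescoping over Icc i (i+m)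
  have key : ∀ m : ℕ, i + m ≤ N →
      ∑ n ∈ Finset.Icc i (i + m), 2 * t n * J n
        ≤ a i - a (i + m + 1) + ∑ n ∈ Finset.Icc i (i + m),
            (8 * t n * K n * D ^ 2 + (t n) ^ 2 * M + 2 * t n * K n) := by
    intro m
    induction m with
    | zero =>
      intro h
      simp only [Nat.add_zero, Finset.Icc_self, Finset.sum_singleton]
      linarith [step i le_rfl h]
    | succ m ihm =>
      intro h
      have hm : i + m ≤ N := by omega
      have hle : i ≤ i + m + 1 := by omega
      rw [show i + (m + 1) = (i + m) + 1 from rfl,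
        Finset.sum_Icc_succ_top hle, Finset.sum_Icc_succ_top hle]
      have := step (i + m + 1) (by omega) (by omega)
      have := ihm hm
      linarith
  have hmain : ∑ n ∈ Finset.Icc i N, 2 * t n * J n
      ≤ 4 * D ^ 2 + ∑ n ∈ Finset.Icc i N,
          (8 * t n * K n * D ^ 2 + (t n) ^ 2 * M + 2 * t n * K n) := by
    have := key (N - i) (by omega)
    rw [show i + (N - i) = N from by omega] at this
    have h1 := ha (N + 1) (by omega) le_rfl
    have h2 := haD i le_rfl hiN
    linarith
  -- conclude
  have hLHS : ∑ n ∈ Finset.Icc i N, (t n / S) * J n = (∑ n ∈ Finset.Icc i N, t n * J n) / S := by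
    rw [Finset.sum_div]
    exact Finset.sum_congr rfl fun n _ => by ring
  rw [hLHS, div_le_div_iff₀ htsum (by linarith)]
  have h2 : ∑ n ∈ Finset.Icc i N, 2 * t n * J n = 2 * ∑ n ∈ Finset.Icc i N, t n * J n := by
    rw [Finset.mul_sum]; exact Finset.sum_congr rfl fun n _ => by ring
  nlinarith [hmain, htsum]
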